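/- Let (a_k)_{k≥1} be a bounded sequence of reals, a ∈ ℝ, P : (0,∞) → ℤ₊ such that for all ε > 0 and all n ≥ 1, (1/P(ε))·∑_{i=n}^{n+P(ε)−1} a_i ≤ a + ε. Assume θ : (0,∞) → ℤ₊ is such that a_{k+1} − a_k ≤ δ for all δ > 0 and k ≥ θ(δ). Then for all ε > 0 and all n ≥ θ(ε/(P(ε/2)+1)) + P(ε/2), we have a_n ≤ a + ε. -/

import Mathlib

theorem stmt6 (a : ℕ → ℝ) (A : ℝ) (P θ : ℝ → ℕ)
    (hbdd : ∃ L : ℝ, ∀ k, 1 ≤ k → |a k| ≤ L)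
    (hPpos : ∀ e, 0 < P e) (hθpos : ∀ e, 0 < θ e)
    (hP : ∀ ε : ℝ, 0 < ε → ∀ n : ℕ, 1 ≤ n →
      (1 / (P ε : ℝ)) * ∑ i ∈ Finset.Ico n (n + P ε), a i ≤ A + ε)
    (hθ : ∀ δ : ℝ, 0 < δ → ∀ k : ℕ, θ δ ≤ k → a (k+1) - a k ≤ δ) :
    ∀ ε : ℝ, 0 < ε → ∀ n : ℕ, θ (ε / (P (ε/2) + 1)) + P (ε/2) ≤ n → a n ≤ A + ε := by
  intro ε hε n hn
  set p := P (ε/2) with hp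
  have hp0 : 0 < p := hPpos _
  have hp0' : (0:ℝ) < p := by exact_mod_cast hp0
  set δ := ε / ((p:ℝ) + 1) with hδ
  have hδ0 : 0 < δ := by positivity
  have hstep : ∀ k, θ δ ≤ k → ∀ j : ℕ, a (k + j) ≤ a k + j * δ := by
    intro k hk j
    induction j with
    | zero => simp
    | succ j ih =>
      have h1 := hθ δ hδ0 (k + j) (le_trans hk (Nat.le_add_right _ _))
      have : a (k + (j+1)) = a (k + j + 1) := by ring_nf
      rw [this]
      push_cast
      nlinarith
  set t := θ δ with ht
  set m := n + 1 - p with hm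
  have hmp : m + p = n + 1 := by omega
  have hm1 : 1 ≤ m := by omega
  have htm : t ≤ m := by omega
  have hterm : ∀ i ∈ Finset.Ico m (n+1), a n ≤ a i + ((n - i : ℕ) : ℝ) * δ := by
    intro i hi
    simp only [Finset.mem_Ico] at hi
    have he : i + (n - i) = n := by omega
    have := hstep i (le_trans htm hi.1) (n - i)
    rwa [he] at this
  have hS := hP (ε/2) (by positivity) m hm1
  rw [← hp, hmp] at hS
  have hsum : ∑ _i ∈ Finset.Ico m (n+1), a n ≤
      ∑ i ∈ Finset.Ico m (n+1), (a i + ((n - i : ℕ) : ℝ) * δ) :=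
    Finset.sum_le_sum hterm
  have hcard : (Finset.Ico m (n+1)).card = p := by
    rw [Nat.card_Ico]; omega
  rw [Finset.sum_const, hcard, nsmul_eq_mul] at hsum
  rw [Finset.sum_add_distrib, ← Finset.sum_mul] at hsum
  -- compute the nat sum
  have hnat : (∑ i ∈ Finset.Ico m (n+1), (n - i)) * 2 = p * (p - 1) := by
    rw [Finset.sum_Ico_eq_sum_range]
    have h1 : n + 1 - m = p := by omega
    rw [h1]
    have h2 : ∀ i ∈ Finset.range p, n - (m + i) = p - 1 - i := by
      intro i hi; simp only [Finset.mem_range] at hi; omega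
    rw [Finset.sum_congr rfl h2]
    have hr : ∑ j ∈ Finset.range p, (p - 1 - j) = ∑ j ∈ Finset.range p, j :=
      Finset.sum_range_reflect (fun i => i) p
    rw [hr]
    simpa using Finset.sum_range_id_mul_two p
  set N := ∑ i ∈ Finset.Ico m (n+1), ((n - i : ℕ) : ℝ) with hN
  have hnatR : N * 2 = (p:ℝ) * ((p:ℝ) - 1) := by
    have h := congrArg (fun x : ℕ => (x : ℝ)) hnat
    push_cast [Nat.cast_sub hp0] at h
    simpa [hN] using h
  have hNval : N = (p:ℝ) * ((p:ℝ) - 1) / 2 := by linarith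
  have hSbound : ∑ i ∈ Finset.Ico m (n+1), a i ≤ (p:ℝ) * (A + ε/2) := by
    rw [div_mul_eq_mul_div, one_mul, div_le_iff₀ hp0'] at hS
    nlinarith [hS]
  have hNδ : N * δ ≤ (p:ℝ) * (ε/2) := by
    rw [hNval, hδ]
    rw [div_mul_div_comm, div_le_iff₀ (by positivity)]
    ring_nf
    nlinarith [hp0', hε]
  have key : (p:ℝ) * a n ≤ (p:ℝ) * (A + ε) := by nlinarith
  nlinarith [key, hp0']
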